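/- Over the two-letter alphabet Σ = {a, b}, the family C(∪,·) is not closed under intersection: there exist languages L₁, L₂ ∈ C(∪,·) such that L₁ ∩ L₂ ∉ C(∪,·). -/

import Mathlib

namespace Consensual

/-- The double alphabet `Σ̃ = Σ × Bool`: second component `true` means the letter is dotted. -/
abbrev DLetter (S : Type) := S × Bool

variable {S : Type} [DecidableEq S]

/-- Partial match of two letters of the double alphabet:
`a @ å = å @ a = a`, `å @ å = å`, undefined otherwise. -/
def matchLetter (x y : DLetter S) : Option (DLetter S) :=
  if x.1 = y.1 ∧ (x.2 ∨ y.2) then some (x.1, x.2 && y.2) else none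

/-- Letterwise partial match of two words over the double alphabet. -/
def matchWord : List (DLetter S) → List (DLetter S) → Option (List (DLetter S))
  | [], [] => some []
  | x :: xs, y :: ys => do
      let l ← matchLetter x y
      let rest ← matchWord xs ys
      pure (l :: rest)
  | _, _ => none

/-- Elementwise match of two languages over the double alphabet. -/
def matchLang (B C : Language (DLetter S)) : Language (DLetter S) :=
  { w | ∃ u ∈ B, ∃ v ∈ C, matchWord u v = some w }

/-- Iterated match `B^{i@}`. -/
def matchIter (B : Language (DLetter S)) : ℕ → Language (DLetter S)
  | 0 => B
  | i + 1 => matchLang (matchIter B i) B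

/-- Match closure `B^@ = ⋃ i, B^{i@}`. -/
def matchClosure (B : Language (DLetter S)) : Language (DLetter S) :=
  ⨆ i, matchIter B i

/-- The embedding of a word over `Σ` as an undotted word over `Σ̃`. -/
def undotWord (w : List S) : List (DLetter S) := w.map (fun a => (a, false))

/-- The consensual language `C(B) = B^@ ∩ Σ*` with base `B`, as a language over `Σ`. -/
def Cons (B : Language (DLetter S)) : Language S :=
  { w | undotWord w ∈ matchClosure B }

/-- A word consisting only of dotted letters. -/
def allDotted (w : List (DLetter S)) : Prop := ∀ l ∈ w, l.2 = true

/-- `Σ̊*`, the language of all-dotted words (including ε). -/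
def dottedStar : Language (DLetter S) := { w | allDotted w }

/-- `B ⊆ Σ̃* − Σ̊⁺`: no nonempty all-dotted word belongs to `B`. -/
def ProperBase (B : Language (DLetter S)) : Prop :=
  ∀ w ∈ B, w ≠ [] → ¬ allDotted w

/-- `B` is in decomposed form with scaffold `sc` and fill `fl`. -/
def IsDecomposed (B sc fl : Language (DLetter S)) : Prop :=
  ProperBase B ∧ B = sc ⊔ fl ∧ Disjoint sc fl ∧
    Cons fl = (⊥ : Language S) ∧ matchLang sc sc = (⊥ : Language (DLetter S))

/-- Two decomposed bases `sc' ⊔ fl'` and `sc'' ⊔ fl''` are joinable. -/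
def Joinable (sc' fl' sc'' fl'' : Language (DLetter S)) : Prop :=
  IsDecomposed ((sc' ⊔ fl') ⊔ (sc'' ⊔ fl'')) (sc' ⊔ sc'') (fl' ⊔ fl'') ∧
    matchLang sc' fl'' = (⊥ : Language (DLetter S)) ∧
    matchLang sc'' fl' = (⊥ : Language (DLetter S))

/-- `dot`: make every letter of a word dotted. -/
def dotWord (w : List (DLetter S)) : List (DLetter S) := w.map (fun l => (l.1, true))

/-- The dot-product `B' ⊙ B'' = (sc'·sc'') ⊔ fl' ⊔ fl''` of two decomposed bases. -/
def dotProduct (sc' fl' sc'' fl'' : Language (DLetter S)) : Language (DLetter S) :=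
  (sc' * sc'') ⊔ fl' ⊔ fl''

/-- Two decomposed bases `sc' ⊔ fl'` and `sc'' ⊔ fl''` are concatenable. -/
def Concatenable (sc' fl' sc'' fl'' : Language (DLetter S)) : Prop :=
  IsDecomposed (dotProduct sc' fl' sc'' fl'') (sc' * sc'') (fl' ⊔ fl'') ∧
  (∀ w' : List (DLetter S), w' ≠ [] → ∀ y' ∈ sc', ∀ y'' ∈ sc'',
    ((∃ x' ∈ fl', w' = x' ++ dotWord y'' ∧ (matchWord x' y').isSome) ↔
      (w' ∈ fl' ∧ (matchWord w' (y' ++ y'')).isSome))) ∧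
  (∀ w'' : List (DLetter S), w'' ≠ [] → ∀ y' ∈ sc', ∀ y'' ∈ sc'',
    ((∃ x'' ∈ fl'', w'' = dotWord y' ++ x'' ∧ (matchWord x'' y'').isSome) ↔
      (w'' ∈ fl'' ∧ (matchWord w'' (y' ++ y'')).isSome)))

/-! ### Slots, scaffolds and fills -/

/-- The word `å a^{r−1} å a^{m−r−1}`. -/
def slotWord (m r : ℕ) (a : S) : List (DLetter S) :=
  (a, true) :: (List.replicate (r - 1) (a, false) ++
    (a, true) :: List.replicate (m - r - 1) (a, false))

/-- `R_m(a) = {å a^{r−1} å a^{m−r−1} : r ∈ R}`. -/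
def Rm (m : ℕ) (R : Set ℕ) (a : S) : Language (DLetter S) :=
  { w | ∃ r ∈ R, w = slotWord m r a }

/-- Projection of a word over `Σ̃` on the two-letter alphabet `{a, å}`. -/
def projA (a : S) (x : List (DLetter S)) : List (DLetter S) :=
  x.filter (fun l => decide (l.1 = a))

/-- The scaffold language `sc_{R,m}`. -/
def scaffold (m : ℕ) (R : Set ℕ) : Language (DLetter S) :=
  { x | ∀ a : S, projA a x ∈ KStar.kstar (Rm m R a ⊔ {[(a, false)]}) }

/-- `switch`: interchange `a` and `å` in every position. -/
def switchWord (w : List (DLetter S)) : List (DLetter S) := w.map (fun l => (l.1, !l.2))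

/-- The fill language `fl_{R,m} = switch(sc_{R,m}) − Σ̊*`. -/
def fill (m : ℕ) (R : Set ℕ) : Language (DLetter S) :=
  { w | ∃ u ∈ scaffold (S := S) m R, w = switchWord u } \ dottedStar

/-- A language is shiftable if it absorbs all-dotted padding on both sides. -/
def Shiftable (F : Language (DLetter S)) : Prop :=
  F = dottedStar * F * dottedStar

/-- `R` is a set of slots of module `m`. -/
def SlotSet (m : ℕ) (R : Set ℕ) : Prop :=
  4 ≤ m ∧ 2 ∣ m ∧ R.Nonempty ∧ ∀ r ∈ R, 1 ≤ r ∧ r ≤ m / 2 - 1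

/-- The factor `α(i)…α(i+m−1)` of `α` (positions numbered from 1). -/
def factorAt (α : List (DLetter S)) (i m : ℕ) : List (DLetter S) :=
  (α.drop (i - 1)).take m

/-- `i` is a restarting point of `α ∈ π_ã(sc_{R,m})`. -/
def RestartScaffold (m : ℕ) (R : Set ℕ) (a : S) (α : List (DLetter S)) (i : ℕ) : Prop :=
  1 ≤ i ∧ i + m - 1 ≤ α.length ∧ factorAt α i m ∈ Rm m R a

/-- `i` is a restarting point of `α ∈ π_ã(fl_{R̂,m})`. -/
def RestartFill (m : ℕ) (Rh : Set ℕ) (a : S) (α : List (DLetter S)) (i : ℕ) : Prop :=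
  1 ≤ i ∧ i + m - 1 ≤ α.length ∧ (∃ u ∈ Rm m Rh a, factorAt α i m = switchWord u)

/-! ### Parikh images, COM-SLIP, and the family C(⊔,·) -/

/-- The Parikh image of a word. -/
def parikh (w : List S) : S → ℕ := fun a => w.count a

/-- A linear subset of `ℕ^Σ`. -/
def IsLinearSet (T : Set (S → ℕ)) : Prop :=
  ∃ (q : ℕ) (c : S → ℕ) (p : Fin q → S → ℕ),
    T = { v | ∃ n : Fin q → ℕ, v = c + ∑ i, n i • p i }

/-- A semilinear subset of `ℕ^Σ`: a finite union of linear sets. -/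
def IsSemilinearSet (T : Set (S → ℕ)) : Prop :=
  ∃ (t : ℕ) (f : Fin t → Set (S → ℕ)), (∀ i, IsLinearSet (f i)) ∧ T = ⋃ i, f i

/-- A commutative language: membership only depends on the Parikh image. -/
def CommutativeLang (L : Language S) : Prop :=
  ∀ w ∈ L, ∀ v : List S, parikh v = parikh w → v ∈ L

/-- A COM-SLIP language: commutative with semilinear Parikh image. -/
def IsComSlip (L : Language S) : Prop :=
  CommutativeLang L ∧ IsSemilinearSet (parikh '' L)

/-- The family `C(⊔,·)`: the smallest family containing the COM-SLIP languages and
closed under binary union and concatenation. -/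
inductive CUC {S : Type} [DecidableEq S] : Language S → Prop
  | base {L : Language S} : IsComSlip L → CUC L
  | union {L M : Language S} : CUC L → CUC M → CUC (L ⊔ M)
  | concat {L M : Language S} : CUC L → CUC M → CUC (L * M)

/-- Regular languages, via acceptance by a DFA with finitely many states. -/
def IsRegularLang {γ : Type} (B : Language γ) : Prop :=
  ∃ (σ : Type) (_ : Fintype σ) (M : DFA γ σ), M.accepts = B

/-! ### Shuffle, appending, and the base `D` for a COM-LIP language -/

/-- `IsShuffle x y z`: `z` is an interleaving of `x` and `y`. -/
inductive IsShuffle {γ : Type} : List γ → List γ → List γ → Prop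
  | nil : IsShuffle [] [] []
  | left {x : γ} {xs ys zs} : IsShuffle xs ys zs → IsShuffle (x :: xs) ys (x :: zs)
  | right {y : γ} {xs ys zs} : IsShuffle xs ys zs → IsShuffle xs (y :: ys) (y :: zs)

/-- The shuffle of two languages. -/
def shuffleLang {γ : Type} (L M : Language γ) : Language γ :=
  { z | ∃ x ∈ L, ∃ y ∈ M, IsShuffle x y z }

/-- Split `w` as `u·v` where `v` is the longest suffix of `w` with no occurrence
of `a` or `å`; returns `(u, v)`. -/
def splitSuffix (a : S) (w : List (DLetter S)) : List (DLetter S) × List (DLetter S) :=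
  ((w.reverse.dropWhile (fun l => decide (l.1 ≠ a))).reverse,
   (w.reverse.takeWhile (fun l => decide (l.1 ≠ a))).reverse)

/-- The append operation `B ◁ A` for `A ⊆ a⁺`. -/
def appendA (a : S) (B : Language (DLetter S)) (A : Language S) : Language (DLetter S) :=
  { w' | ∃ w ∈ B, ∃ s ∈ A, ∃ z, IsShuffle (splitSuffix a w).2 (undotWord s) z ∧
      w' = (splitSuffix a w).1 ++ z }

/-- Projection of a language over `Σ` on the single letter `a`. -/
def projLetter (a : S) (F : Language S) : Language S :=
  { y | ∃ w ∈ F, y = w.filter (fun l => decide (l = a)) }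

/-- Letter-by-letter appending `B ◁ F` (over the alphabet `Fin k`,
processing the letters `a₁, …, a_k` in order). -/
def lblAppend {k : ℕ} (B : Language (DLetter (Fin k))) (F : Language (Fin k)) :
    Language (DLetter (Fin k)) :=
  (List.finRange k).foldl (fun Bc a => appendA a Bc (projLetter a F)) B

/-- Projection of a word over `Σ̃` on the undotted letters. -/
def projSigma (x : List (DLetter S)) : List S :=
  (x.filter (fun l => !l.2)).map Prod.fst

/-- The fill part `X` of the decomposed base for a COM-LIP language with periods `p`. -/
def Xlang {k q : ℕ} (m r : ℕ) (p : Fin q → Fin k → ℕ) : Language (DLetter (Fin k)) :=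
  { x | x ∈ fill m {r} ∧ ∃ i : Fin q, parikh (projSigma x) = p i }

/-- `Y = (R_m(a₁))* ⧢ … ⧢ (R_m(a_k))*`. -/
def Ylang (k : ℕ) (m : ℕ) (R : Set ℕ) : Language (DLetter (Fin k)) :=
  (List.finRange k).foldl
    (fun acc a => shuffleLang acc (KStar.kstar (Rm m R a))) (1 : Language (DLetter (Fin k)))

/-- The finite commutative language `W` with Parikh image
`{c + h₁p⁽¹⁾ + … + h_qp⁽q⁾ : 0 ≤ hⱼ < m/2}`. -/
def Wlang {k q : ℕ} (m : ℕ) (c : Fin k → ℕ) (p : Fin q → Fin k → ℕ) : Language (Fin k) :=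
  { w | ∃ h : Fin q → ℕ, (∀ i, h i < m / 2) ∧ parikh w = c + ∑ i, h i • p i }

/-- The decomposed base `D = X ⊔ (Y ◁ W)` for a COM-LIP language. -/
def Dlang {k q : ℕ} (m r : ℕ) (c : Fin k → ℕ) (p : Fin q → Fin k → ℕ) :
    Language (DLetter (Fin k)) :=
  Xlang m r p ⊔ lblAppend (Ylang k m {r}) (Wlang m c p)

/-- `matchListAll [x₁, …, x_n] = some u` iff `u = x₁ @ x₂ @ … @ x_n`. -/
def matchListAll : List (List (DLetter S)) → Option (List (DLetter S))
  | [] => none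
  | [x] => some x
  | x :: xs => (matchListAll xs).bind (fun u => matchWord x u)



/-! ### Auxiliary development for Statement 1 -/

section Aux
open List

private lemma fin2_eq (x : Fin 2) : x = 0 ∨ x = 1 := by
  revert x; decide


private lemma count00 (n : ℕ) : (List.replicate n (0:Fin 2)).count 0 = n := by
  simp

private lemma count01 (n : ℕ) : (List.replicate n (0:Fin 2)).count 1 = 0 := by
  simp [List.count_replicate]

private lemma count10 (n : ℕ) : (List.replicate n (1:Fin 2)).count 0 = 0 := by
  simp [List.count_replicate]

private lemma count11 (n : ℕ) : (List.replicate n (1:Fin 2)).count 1 = n := by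
  simp

private lemma len2 (v : List (Fin 2)) : v.length = v.count 0 + v.count 1 := by
  induction v with
  | nil => simp
  | cons x xs ih =>
    rcases fin2_eq x with h | h <;> subst h <;>
      simp [List.count_cons, ih] <;> omega

private lemma rep_of_count1 {v : List (Fin 2)} (h : v.count 1 = 0) :
    v = List.replicate (v.count 0) 0 := by
  rw [List.eq_replicate_iff]
  refine ⟨by rw [len2 v, h]; omega, ?_⟩
  intro b hb
  rcases fin2_eq b with hb' | hb'
  · exact hb'
  · subst hb'; exact absurd hb (List.count_eq_zero.mp h)

private lemma rep_of_count0 {v : List (Fin 2)} (h : v.count 0 = 0) :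
    v = List.replicate (v.count 1) 1 := by
  rw [List.eq_replicate_iff]
  refine ⟨by rw [len2 v, h, Nat.zero_add], ?_⟩
  intro b hb
  rcases fin2_eq b with hb' | hb'
  · subst hb'; exact absurd hb (List.count_eq_zero.mp h)
  · exact hb'

/-- The language `a*` over `Fin 2` (with `a = 0`). -/
private def LangA : Language (Fin 2) := { w | ∃ n, w = List.replicate n 0 }

/-- The language `b*` over `Fin 2` (with `b = 1`). -/
private def LangB : Language (Fin 2) := { w | ∃ n, w = List.replicate n 1 }

/-- The commutative language of words with equally many `a`s and `b`s. -/
private def LangE : Language (Fin 2) := { w | w.count 0 = w.count 1 }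

private lemma comslip_LangA : IsComSlip LangA := by
  constructor
  · rintro w ⟨n, rfl⟩ v hv
    have h0 := congrFun hv 0
    have h1 := congrFun hv 1
    simp only [parikh, List.count_replicate] at h0 h1
    norm_num at h0 h1
    exact ⟨n, by rw [rep_of_count1 h1, h0]⟩
  · refine ⟨1, fun _ => { v | ∃ n : Fin 1 → ℕ, v = (fun _ => 0) +
      ∑ i, n i • (fun a : Fin 2 => if a = 0 then 1 else 0) }, fun _ => ⟨1, _, _, rfl⟩, ?_⟩
    rw [Set.iUnion_const]
    ext v
    simp only [Set.mem_image, Set.mem_setOf_eq, Fin.sum_univ_one]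
    constructor
    · rintro ⟨w, ⟨n, rfl⟩, rfl⟩
      refine ⟨fun _ => n, funext fun a => ?_⟩
      rcases fin2_eq a with h | h <;> subst h <;>
        simp [parikh, List.count_replicate]
    · rintro ⟨n, rfl⟩
      refine ⟨List.replicate (n 0) 0, ⟨n 0, rfl⟩, funext fun a => ?_⟩
      rcases fin2_eq a with h | h <;> subst h <;>
        simp [parikh, List.count_replicate]

private lemma comslip_LangB : IsComSlip LangB := by
  constructor
  · rintro w ⟨n, rfl⟩ v hv
    have h0 := congrFun hv 0
    have h1 := congrFun hv 1
    simp only [parikh, List.count_replicate] at h0 h1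
    norm_num at h0 h1
    exact ⟨n, by rw [rep_of_count0 h0, h1]⟩
  · refine ⟨1, fun _ => { v | ∃ n : Fin 1 → ℕ, v = (fun _ => 0) +
      ∑ i, n i • (fun a : Fin 2 => if a = 1 then 1 else 0) }, fun _ => ⟨1, _, _, rfl⟩, ?_⟩
    rw [Set.iUnion_const]
    ext v
    simp only [Set.mem_image, Set.mem_setOf_eq, Fin.sum_univ_one]
    constructor
    · rintro ⟨w, ⟨n, rfl⟩, rfl⟩
      refine ⟨fun _ => n, funext fun a => ?_⟩
      rcases fin2_eq a with h | h <;> subst h <;>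
        simp [parikh, List.count_replicate]
    · rintro ⟨n, rfl⟩
      refine ⟨List.replicate (n 0) 1, ⟨n 0, rfl⟩, funext fun a => ?_⟩
      rcases fin2_eq a with h | h <;> subst h <;>
        simp [parikh, List.count_replicate]

private lemma comslip_LangE : IsComSlip LangE := by
  constructor
  · rintro w hw v hv
    have h0 := congrFun hv 0
    have h1 := congrFun hv 1
    simp only [parikh] at h0 h1
    show v.count 0 = v.count 1
    rw [h0, h1]; exact hw
  · refine ⟨1, fun _ => { v | ∃ n : Fin 1 → ℕ, v = (fun _ => 0) +
      ∑ i, n i • (fun _ : Fin 2 => 1) }, fun _ => ⟨1, _, _, rfl⟩, ?_⟩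
    rw [Set.iUnion_const]
    ext v
    simp only [Set.mem_image, Set.mem_setOf_eq, Fin.sum_univ_one]
    constructor
    · rintro ⟨w, hw, rfl⟩
      refine ⟨fun _ => w.count 0, funext fun a => ?_⟩
      rcases fin2_eq a with h | h <;> subst h <;>
        simp [parikh, LangE.eq_def] at hw ⊢ <;> omega
    · rintro ⟨n, rfl⟩
      refine ⟨List.replicate (n 0) 0 ++ List.replicate (n 0) 1, ?_, funext fun a => ?_⟩
      · show _ = _
        simp [List.count_append, List.count_replicate]
      · rcases fin2_eq a with h | h <;> subst h <;>
          simp [parikh, List.count_append, List.count_replicate]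

private lemma mem_LL {w : List (Fin 2)} :
    w ∈ (LangA * LangB ⊓ LangE : Language (Fin 2)) ↔
      ∃ n, w = List.replicate n 0 ++ List.replicate n 1 := by
  constructor
  · rintro ⟨hmul, hc⟩
    replace hmul := Language.mem_mul.mp hmul
    obtain ⟨u, ⟨m, rfl⟩, v, ⟨k, rfl⟩, rfl⟩ := hmul
    have hc' : m = k := by
      have : (List.replicate m (0:Fin 2) ++ List.replicate k 1).count 0 =
          (List.replicate m (0:Fin 2) ++ List.replicate k 1).count 1 := hc
      simpa [List.count_append, List.count_replicate] using this
    exact ⟨m, by rw [hc']⟩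
  · rintro ⟨n, rfl⟩
    refine ⟨Language.mem_mul.mpr ⟨_, ⟨n, rfl⟩, _, ⟨n, rfl⟩, rfl⟩, ?_⟩
    show _ = _
    simp [List.count_append, List.count_replicate]

private lemma mem_listProd {γ : Type} {Ks : List (Language γ)} {w : List γ} :
    w ∈ Ks.prod ↔ ∃ us, List.Forall₂ (· ∈ ·) us Ks ∧ us.flatten = w := by
  induction Ks generalizing w with
  | nil =>
    rw [List.prod_nil, Language.mem_one]
    constructor
    · rintro rfl; exact ⟨[], List.Forall₂.nil, rfl⟩
    · rintro ⟨us, h, rfl⟩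
      rw [List.forall₂_nil_right_iff.mp h]; rfl
  | cons K Ks ih =>
    rw [List.prod_cons, Language.mem_mul]
    constructor
    · rintro ⟨u, hu, v, hv, rfl⟩
      obtain ⟨us, h1, rfl⟩ := ih.mp hv
      exact ⟨u :: us, List.Forall₂.cons hu h1, rfl⟩
    · rintro ⟨us, h, rfl⟩
      cases h with
      | cons hu h' => exact ⟨_, hu, _, ih.mpr ⟨_, h', rfl⟩, rfl⟩

private lemma forall₂_append_split {α β : Type} {R : α → β → Prop} :
    ∀ {s t : List α} {l : List β}, List.Forall₂ R (s ++ t) l →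
      ∃ l₁ l₂, l = l₁ ++ l₂ ∧ List.Forall₂ R s l₁ ∧ List.Forall₂ R t l₂ := by
  intro s
  induction s with
  | nil => exact fun h => ⟨[], _, rfl, List.Forall₂.nil, h⟩
  | cons a s ih =>
    intro t l h
    rw [List.cons_append] at h
    cases h with
    | cons hab h' =>
      obtain ⟨l₁, l₂, rfl, h1, h2⟩ := ih h'
      exact ⟨_ :: l₁, l₂, rfl, List.Forall₂.cons hab h1, h2⟩

/-- Flattening: every language in `C(∪,·)` is a finite union of products of
COM-SLIP languages. -/
private lemma cuc_flatten {L : Language (Fin 2)} (h : CUC L) :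
    ∃ Ps : List (List (Language (Fin 2))),
      (∀ Ks ∈ Ps, ∀ K ∈ Ks, IsComSlip K) ∧ ∀ w, w ∈ L ↔ ∃ Ks ∈ Ps, w ∈ Ks.prod := by
  induction h with
  | @base L hL =>
    refine ⟨[[L]], ?_, fun w => ?_⟩
    · intro Ks hKs K hK
      simp only [List.mem_singleton] at hKs
      subst hKs
      simp only [List.mem_singleton] at hK
      subst hK; exact hL
    · simp [List.prod_singleton]
  | @union L M _ _ ihL ihM =>
    obtain ⟨Ps1, hc1, hm1⟩ := ihL
    obtain ⟨Ps2, hc2, hm2⟩ := ihM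
    refine ⟨Ps1 ++ Ps2, ?_, fun w => ?_⟩
    · intro Ks hKs
      rcases List.mem_append.mp hKs with h | h
      · exact hc1 _ h
      · exact hc2 _ h
    · constructor
      · rintro (h | h)
        · obtain ⟨Ks, hKs, hw⟩ := (hm1 w).mp h
          exact ⟨Ks, List.mem_append.mpr (Or.inl hKs), hw⟩
        · obtain ⟨Ks, hKs, hw⟩ := (hm2 w).mp h
          exact ⟨Ks, List.mem_append.mpr (Or.inr hKs), hw⟩
      · rintro ⟨Ks, hKs, hw⟩
        rcases List.mem_append.mp hKs with h | h
        · exact Or.inl ((hm1 w).mpr ⟨Ks, h, hw⟩)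
        · exact Or.inr ((hm2 w).mpr ⟨Ks, h, hw⟩)
  | @concat L M _ _ ihL ihM =>
    obtain ⟨Ps1, hc1, hm1⟩ := ihL
    obtain ⟨Ps2, hc2, hm2⟩ := ihM
    refine ⟨Ps1.flatMap (fun Ks1 => Ps2.map (Ks1 ++ ·)), ?_, fun w => ?_⟩
    · intro Ks hKs K hK
      obtain ⟨Ks1, hKs1, hKs'⟩ := List.mem_flatMap.mp hKs
      obtain ⟨Ks2, hKs2, rfl⟩ := List.mem_map.mp hKs'
      rcases List.mem_append.mp hK with h | h
      · exact hc1 _ hKs1 _ h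
      · exact hc2 _ hKs2 _ h
    · rw [Language.mem_mul]
      constructor
      · rintro ⟨u, hu, v, hv, rfl⟩
        obtain ⟨Ks1, hKs1, hw1⟩ := (hm1 u).mp hu
        obtain ⟨Ks2, hKs2, hw2⟩ := (hm2 v).mp hv
        refine ⟨Ks1 ++ Ks2, List.mem_flatMap.mpr ⟨Ks1, hKs1,
          List.mem_map.mpr ⟨Ks2, hKs2, rfl⟩⟩, ?_⟩
        rw [List.prod_append, Language.mem_mul]
        exact ⟨u, hw1, v, hw2, rfl⟩
      · rintro ⟨Ks, hKs, hw⟩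
        obtain ⟨Ks1, hKs1, hKs'⟩ := List.mem_flatMap.mp hKs
        obtain ⟨Ks2, hKs2, rfl⟩ := List.mem_map.mp hKs'
        rw [List.prod_append, Language.mem_mul] at hw
        obtain ⟨u, hu, v, hv, rfl⟩ := hw
        exact ⟨u, (hm1 u).mpr ⟨Ks1, hKs1, hu⟩, v, (hm2 v).mpr ⟨Ks2, hKs2, hv⟩, rfl⟩

/-- A word containing `1` strictly before `0` is not of the form `0^m 1^m`. -/
private lemma not_sorted {A B : List (Fin 2)} {p q m : ℕ} (hp : 1 ≤ p) (hq : 1 ≤ q)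
    (h : A ++ ((List.replicate q 1 ++ List.replicate p 0) ++ B) =
      List.replicate m 0 ++ List.replicate m 1) : False := by
  have hsub : [(1 : Fin 2), 0] <+
      (List.replicate m (0 : Fin 2) ++ List.replicate m 1) := by
    rw [← h]
    have h1 : [(1:Fin 2)] <+ List.replicate q 1 :=
      List.singleton_sublist.mpr (List.mem_replicate.mpr ⟨by omega, rfl⟩)
    have h0 : [(0:Fin 2)] <+ List.replicate p 0 :=
      List.singleton_sublist.mpr (List.mem_replicate.mpr ⟨by omega, rfl⟩)
    calc [(1:Fin 2), 0] = [(1:Fin 2)] ++ [0] := rfl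
      _ <+ List.replicate q 1 ++ List.replicate p 0 := h1.append h0
      _ <+ (List.replicate q 1 ++ List.replicate p 0) ++ B :=
          List.sublist_append_left _ _
      _ <+ A ++ ((List.replicate q 1 ++ List.replicate p 0) ++ B) :=
          List.sublist_append_right _ _
  have hpw : List.Pairwise (· ≤ ·)
      (List.replicate m (0 : Fin 2) ++ List.replicate m 1) := by
    rw [List.pairwise_append]
    refine ⟨List.pairwise_replicate.mpr (Or.inr le_rfl),
      List.pairwise_replicate.mpr (Or.inr le_rfl), ?_⟩
    intro a ha b hb
    rw [List.eq_of_mem_replicate ha, List.eq_of_mem_replicate hb]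
    decide
  have := List.Pairwise.sublist hsub hpw
  rw [List.pairwise_cons] at this
  exact absurd (this.1 0 (by simp)) (by decide)

/-- Cutting a decomposition of `0^m 1^k` into pure blocks. -/
private lemma pure_cut : ∀ (us : List (List (Fin 2))) (m k : ℕ),
    (∀ u ∈ us, u.count 0 = 0 ∨ u.count 1 = 0) →
    us.flatten = List.replicate m 0 ++ List.replicate k 1 →
    ∃ i ≤ us.length, (us.take i).flatten = List.replicate m 0 ∧
      (us.drop i).flatten = List.replicate k 1 := by
  intro us
  induction us with
  | nil =>
    intro m k _ h
    have hlen : m = 0 ∧ k = 0 := by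
      have := congrArg List.length h
      simp at this
      omega
    exact ⟨0, le_rfl, by simp [hlen.1], by simp [hlen.2]⟩
  | cons u us ih =>
    intro m k hpure h
    rw [List.flatten_cons] at h
    have hu_pref : u = (List.replicate m (0:Fin 2) ++ List.replicate k 1).take u.length := by
      rw [← h, List.take_left]
    have hu_flat : us.flatten =
        (List.replicate m (0:Fin 2) ++ List.replicate k 1).drop u.length := by
      rw [← h, List.drop_left]
    rcases hpure u (by simp) with h0 | h1
    · -- `u` is a block of `1`s
      by_cases hl : u.count 1 = 0
      · -- `u` is empty
        have hu_nil : u = [] := by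
          have := len2 u
          rw [h0, hl] at this
          exact List.eq_nil_of_length_eq_zero this
        subst hu_nil
        simp only [List.nil_append] at h
        obtain ⟨i, hi, h1', h2'⟩ := ih m k (fun v hv => hpure v (by simp [hv])) h
        exact ⟨i + 1, by simpa using Nat.succ_le_succ hi, by simpa using h1',
          by simpa using h2'⟩
      · -- `u` starts with a `1`, so `m = 0`
        have hurep : u = List.replicate (u.count 1) 1 := rep_of_count0 h0
        have hlen_u : u.length = u.count 1 := by rw [len2 u, h0, Nat.zero_add]
        have hm : m = 0 := by
          have hcount := congrArg (List.count 0) hu_pref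
          rw [List.take_append, List.count_append,
            List.take_replicate, List.take_replicate,
            List.count_replicate, List.count_replicate] at hcount
          simp only [h0] at hcount
          norm_num at hcount
          omega
        subst hm
        refine ⟨0, Nat.zero_le _, by simp, ?_⟩
        simpa using h
    · -- `u` is a block of `0`s
      have hurep : u = List.replicate (u.count 0) 0 := rep_of_count1 h1
      have hlen_u : u.length = u.count 0 := by rw [len2 u, h1]; omega
      have hlm : u.length ≤ m := by
        have hcount := congrArg (List.count 1) hu_pref
        rw [List.take_append, List.count_append,
          List.take_replicate, List.take_replicate,
          List.count_replicate, List.count_replicate] at hcount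
        simp only [h1] at hcount
        norm_num at hcount
        have hlen := congrArg List.length hu_pref
        rw [List.length_take, List.length_append, List.length_replicate,
          List.length_replicate] at hlen
        omega
      have hflat : us.flatten =
          List.replicate (m - u.length) (0:Fin 2) ++ List.replicate k 1 := by
        have e1 : u.length - (List.replicate m (0:Fin 2)).length = 0 := by
          simpa using Nat.sub_eq_zero_of_le hlm
        rw [hu_flat, List.drop_append, e1, List.drop_replicate]
        simp
      obtain ⟨i, hi, h1', h2'⟩ :=
        ih (m - u.length) k (fun v hv => hpure v (by simp [hv])) hflat
      refine ⟨i + 1, by simpa using Nat.succ_le_succ hi, ?_, by simpa using h2'⟩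
      rw [List.take_succ_cons, List.flatten_cons, h1']
      conv_rhs => rw [show m = u.length + (m - u.length) by omega]
      rw [List.replicate_add]
      congr 1
      conv_lhs => rw [hurep]
      rw [hlen_u]

private lemma le_foldr_max : ∀ (l : List ℕ) {x : ℕ}, x ∈ l → x ≤ l.foldr max 0
  | a :: l, x, h => by
    rcases List.mem_cons.mp h with rfl | h
    · exact le_max_left _ _
    · exact le_trans (le_foldr_max l h) (le_max_right _ _)

end Aux

/-- Over the two-letter alphabet, the family `C(∪,·)` is not closed
under intersection. -/
theorem cuc_not_closed_under_intersection :
    ∃ L₁ L₂ : Language (Fin 2), CUC L₁ ∧ CUC L₂ ∧ ¬ CUC (L₁ ⊓ L₂) := by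
  classical
  refine ⟨LangA * LangB, LangE,
    CUC.concat (CUC.base comslip_LangA) (CUC.base comslip_LangB),
    CUC.base comslip_LangE, ?_⟩
  intro hcuc
  obtain ⟨Ps, hPs, hmem⟩ := cuc_flatten hcuc
  have key : ∀ n : ℕ, ∃ j : Fin Ps.length, ∃ i ≤ (Ps.get j).length, ∃ us,
      List.Forall₂ (· ∈ ·) us (Ps.get j) ∧
      (us.take i).flatten = List.replicate n 0 ∧
      (us.drop i).flatten = List.replicate n 1 := by
    intro n
    have hw : (List.replicate n (0:Fin 2) ++ List.replicate n 1) ∈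
        (LangA * LangB ⊓ LangE : Language (Fin 2)) := mem_LL.mpr ⟨n, rfl⟩
    obtain ⟨Ks, hKsmem, hwP⟩ := (hmem _).mp hw
    obtain ⟨j, hj⟩ := List.mem_iff_get.mp hKsmem
    obtain ⟨us, hf, hflat⟩ := mem_listProd.mp hwP
    by_cases hpure : ∀ u ∈ us, u.count 0 = 0 ∨ u.count 1 = 0
    · obtain ⟨i, hi, h1, h2⟩ := pure_cut us n n hpure hflat
      have hlen : us.length = Ks.length := hf.length_eq
      exact ⟨j, i, by rw [hj]; omega, us, by rw [hj]; exact hf, h1, h2⟩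
    · exfalso
      push_neg at hpure
      obtain ⟨u, hu_mem, hc0, hc1⟩ := hpure
      obtain ⟨s, t, rfl⟩ := List.append_of_mem hu_mem
      obtain ⟨Ks1, Ks2, rfl, hf1, hf2⟩ := forall₂_append_split hf
      cases hf2 with
      | cons huK hf2' =>
        rename_i K Ks2'
        have hKcs : IsComSlip K := hPs _ hKsmem K (by simp)
        have hparikh : parikh (List.replicate (u.count 1) (1:Fin 2) ++
            List.replicate (u.count 0) 0) = parikh u := by
          funext a
          rcases fin2_eq a with h | h <;> subst h <;>
            simp [parikh, List.count_append, count00, count01, count10, count11]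
        have hu'K : (List.replicate (u.count 1) (1:Fin 2) ++
            List.replicate (u.count 0) 0) ∈ K := hKcs.1 u huK _ hparikh
        have hnew : (s ++ (List.replicate (u.count 1) (1:Fin 2) ++
            List.replicate (u.count 0) 0) :: t).flatten ∈ (Ks1 ++ K :: Ks2').prod :=
          mem_listProd.mpr ⟨_, List.rel_append hf1 (List.Forall₂.cons hu'K hf2'), rfl⟩
        have hinL := (hmem _).mpr ⟨_, hKsmem, hnew⟩
        obtain ⟨m, hm⟩ := mem_LL.mp hinL
        rw [List.flatten_append, List.flatten_cons] at hm
        exact not_sorted (Nat.one_le_iff_ne_zero.mpr hc0)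
          (Nat.one_le_iff_ne_zero.mpr hc1) hm
  choose jf iF hle usf hforall hA hB using key
  have hbound : ∀ n, iF n < (Ps.map List.length).foldr max 0 + 1 := fun n =>
    Nat.lt_succ_of_le (le_trans (hle n)
      (le_foldr_max _ (List.mem_map.mpr ⟨_, List.get_mem Ps (jf n), rfl⟩)))
  obtain ⟨n, n', hne, hg⟩ := Finite.exists_ne_map_eq_of_infinite
    (fun n => ((jf n, ⟨iF n, hbound n⟩) :
      Fin Ps.length × Fin ((Ps.map List.length).foldr max 0 + 1)))
  have hj : jf n = jf n' := congrArg Prod.fst hg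
  have hi : iF n = iF n' := by
    have := congrArg (fun p => (p.2 : Fin ((Ps.map List.length).foldr max 0 + 1)).val) hg
    simpa using this
  have hforall2 : List.Forall₂ (· ∈ ·)
      ((usf n).take (iF n) ++ (usf n').drop (iF n')) (Ps.get (jf n)) := by
    conv_rhs => rw [← List.take_append_drop (iF n) (Ps.get (jf n))]
    refine List.rel_append (List.forall₂_take _ (hforall n)) ?_
    rw [hi, hj]
    exact List.forall₂_drop _ (hforall n')
  have hz : ((usf n).take (iF n) ++ (usf n').drop (iF n')).flatten ∈
      (Ps.get (jf n)).prod := mem_listProd.mpr ⟨_, hforall2, rfl⟩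
  have hzL := (hmem _).mpr ⟨_, List.get_mem Ps (jf n), hz⟩
  rw [List.flatten_append, hA n, hB n'] at hzL
  obtain ⟨m, hm⟩ := mem_LL.mp hzL
  have e0 := congrArg (List.count 0) hm
  have e1 := congrArg (List.count 1) hm
  simp only [List.count_append, count00, count01, count10, count11] at e0 e1
  omega


end Consensual
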